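/- Let $p, q \in \mathbb{R}^n$, $\beta \in \mathbb{R}$, and let $M$ be the symmetric matrix with entries $M_{ij} = p_i\delta_{ij} - \beta q_i q_j$. Then for each $0 \le k \le n$, the $k$-th elementary symmetric function of the eigenvalues of $M$ equals $\sigma_k(p) - \beta \sum_{i=1}^n q_i^2\, \sigma_{k-1;i}(p)$, where $\sigma_{k-1;i}(p)$ denotes the $(k-1)$-th elementary symmetric function of the variables $(p_j)_{j\neq i}$ and $\sigma_{-1} := 0$. -/

import Mathlib

open Finset Matrix

/-- The `k`-th elementary symmetric function of the variables `a i` for `i ∈ s`. -/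
noncomputable def esym {n : ℕ} (s : Finset (Fin n)) (k : ℕ) (a : Fin n → ℝ) : ℝ :=
  ∑ T ∈ s.powersetCard k, ∏ i ∈ T, a i

private lemma det_diag_add_rank_one_field {F : Type*} [Field F] {m : ℕ}
    (d u v : Fin m → F) (hd : ∀ i, d i ≠ 0) :
    (Matrix.diagonal d + Matrix.vecMulVec u v).det
      = ∏ i, d i + ∑ i, u i * v i * ∏ j ∈ Finset.univ.erase i, d j := by
  have hdet : IsUnit (Matrix.diagonal d).det := by
    rw [Matrix.det_diagonal]
    exact (Finset.prod_ne_zero_iff.2 fun i _ => hd i).isUnit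
  have hinv : (Matrix.diagonal d)⁻¹ = Matrix.diagonal fun i => (d i)⁻¹ := by
    apply Matrix.inv_eq_right_inv
    rw [Matrix.diagonal_mul_diagonal]
    convert Matrix.diagonal_one
    exact mul_inv_cancel₀ (hd _)
  rw [Matrix.vecMulVec_eq Unit, Matrix.det_add_replicateCol_mul_replicateRow hdet, Matrix.det_diagonal,
    Matrix.det_unique, hinv]
  have hentry : ((1 + Matrix.replicateRow Unit v * Matrix.diagonal (fun i => (d i)⁻¹) * Matrix.replicateCol Unit u :
      Matrix Unit Unit F)) default default = 1 + ∑ i, v i * (d i)⁻¹ * u i := by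
    simp [Matrix.mul_apply, Matrix.diagonal_apply, Finset.sum_mul]
  rw [hentry, mul_add, mul_one, Finset.mul_sum]
  congr 1
  refine Finset.sum_congr rfl fun i _ => ?_
  rw [← Finset.mul_prod_erase _ _ (Finset.mem_univ i)]
  have := hd i
  field_simp

private lemma det_diag_add_rank_one {R : Type*} [CommRing R] [IsDomain R] {m : ℕ}
    (d u v : Fin m → R) (hd : ∀ i, d i ≠ 0) :
    (Matrix.diagonal d + Matrix.vecMulVec u v).det
      = ∏ i, d i + ∑ i, u i * v i * ∏ j ∈ Finset.univ.erase i, d j := by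
  set F := FractionRing R
  let f : R →+* F := algebraMap R F
  have hinj : Function.Injective f := IsFractionRing.injective R F
  apply hinj
  rw [RingHom.map_det, RingHom.mapMatrix_apply]
  have hmap : (Matrix.diagonal d + Matrix.vecMulVec u v).map f
      = Matrix.diagonal (f ∘ d) + Matrix.vecMulVec (f ∘ u) (f ∘ v) := by
    ext i j
    by_cases h : i = j <;>
      simp [Matrix.map_apply, Matrix.diagonal_apply, Matrix.vecMulVec_apply, h]
  rw [hmap, det_diag_add_rank_one_field _ _ _ (fun i => fun h => hd i (by
    apply hinj; simpa using h))]
  simp [map_add, map_sum, map_prod, _root_.map_mul, Function.comp]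

private lemma coeff_prod_X_sub_C {m : ℕ} (s : Finset (Fin m)) (a : Fin m → ℝ) {k : ℕ}
    (hk : k ≤ s.card) :
    (∏ i ∈ s, (Polynomial.X - Polynomial.C (a i))).coeff (s.card - k)
      = (-1 : ℝ) ^ k * esym s k a := by
  have h1 : s.card - k ≤ s.card := Nat.sub_le _ _
  simp_rw [sub_eq_add_neg, ← Polynomial.C_neg]
  rw [Finset.prod_X_add_C_coeff s (fun i => -a i) h1, Nat.sub_sub_self hk, esym, Finset.mul_sum]
  refine Finset.sum_congr rfl fun t ht => ?_
  have hc : t.card = k := (Finset.mem_powersetCard.mp ht).2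
  calc ∏ i ∈ t, -a i = ∏ i ∈ t, (-1 : ℝ) * a i := by simp
    _ = (-1 : ℝ) ^ k * ∏ i ∈ t, a i := by rw [Finset.prod_mul_distrib, Finset.prod_const, hc]

private lemma charpoly_eq_prod_eigen {n : ℕ} (M : Matrix (Fin n) (Fin n) ℝ)
    (hM : M.IsHermitian) :
    M.charpoly = ∏ i, (Polynomial.X - Polynomial.C (hM.eigenvalues i)) := by
  set U : Matrix (Fin n) (Fin n) ℝ := (hM.eigenvectorUnitary : Matrix (Fin n) (Fin n) ℝ) with hU
  have h1 : U * star U = 1 := (Matrix.mem_unitaryGroup_iff).mp hM.eigenvectorUnitary.2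
  set D : Matrix (Fin n) (Fin n) ℝ := Matrix.diagonal hM.eigenvalues with hD
  have hspec : M = U * D * star U := by
    have := hM.spectral_theorem
    simpa [RCLike.ofReal_real_eq_id] using this
  let f : ℝ →+* Polynomial ℝ := Polynomial.C
  have hXs : (Matrix.scalar (Fin n) (Polynomial.X : Polynomial ℝ))
      = (Polynomial.X : Polynomial ℝ) • 1 := by
    ext i j
    by_cases h : i = j <;> simp [Matrix.scalar_apply, Matrix.one_apply, Matrix.diagonal_apply, h]
  have hUD : Matrix.charmatrix M = f.mapMatrix U * Matrix.charmatrix D * f.mapMatrix (star U) := by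
    rw [Matrix.charmatrix, Matrix.charmatrix, hspec, _root_.map_mul, _root_.map_mul,
      Matrix.mul_sub, Matrix.sub_mul]
    congr 1
    rw [hXs, Matrix.mul_smul, Matrix.mul_one, Matrix.smul_mul, ← _root_.map_mul, h1,
      _root_.map_one]
  have hMD : M.charpoly = D.charpoly := by
    show (Matrix.charmatrix M).det = (Matrix.charmatrix D).det
    rw [hUD, Matrix.det_mul, Matrix.det_mul]
    have h2 : (f.mapMatrix U).det * (f.mapMatrix (star U)).det = 1 := by
      rw [← Matrix.det_mul, ← _root_.map_mul, h1, _root_.map_one, Matrix.det_one]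
    calc (f.mapMatrix U).det * (Matrix.charmatrix D).det * (f.mapMatrix (star U)).det
        = (Matrix.charmatrix D).det * ((f.mapMatrix U).det * (f.mapMatrix (star U)).det) := by
          ring
      _ = (Matrix.charmatrix D).det := by rw [h2, mul_one]
  rw [hMD]
  show (Matrix.charmatrix D).det = _
  have h3 : Matrix.charmatrix D
      = Matrix.diagonal fun i => Polynomial.X - Polynomial.C (hM.eigenvalues i) := by
    ext i j : 2
    by_cases h : i = j <;>
      simp [Matrix.charmatrix_apply, Matrix.diagonal_apply, hD, h, Matrix.scalar_apply]
  rw [h3, Matrix.det_diagonal]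

private lemma charpoly_formula {n : ℕ} (p q : Fin n → ℝ) (β : ℝ)
    (M : Matrix (Fin n) (Fin n) ℝ)
    (hMdef : ∀ i j, M i j = p i * (if i = j then 1 else 0) - β * (q i * q j)) :
    M.charpoly = ∏ i, (Polynomial.X - Polynomial.C (p i))
      + ∑ i, Polynomial.C (β * q i) * Polynomial.C (q i)
          * ∏ j ∈ Finset.univ.erase i, (Polynomial.X - Polynomial.C (p j)) := by
  have hch : Matrix.charmatrix M
      = Matrix.diagonal (fun i => Polynomial.X - Polynomial.C (p i))
        + Matrix.vecMulVec (fun i => Polynomial.C (β * q i)) (fun j => Polynomial.C (q j)) := by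
    ext i j : 2
    by_cases h : i = j
    · subst h
      rw [Matrix.charmatrix_apply_eq, hMdef]
      simp only [Pi.add_apply, Matrix.add_apply, Matrix.diagonal_apply_eq,
        Matrix.vecMulVec_apply, eq_self_iff_true, if_true, Polynomial.C_sub, Polynomial.C_mul,
        Polynomial.C_1]
      ring_nf
    · rw [Matrix.charmatrix_apply_ne _ _ _ h, hMdef]
      simp only [Matrix.add_apply, Matrix.diagonal_apply_ne _ h, Matrix.vecMulVec_apply,
        if_neg h, Polynomial.C_sub, Polynomial.C_mul, Polynomial.C_0]
      ring_nf
  show (Matrix.charmatrix M).det = _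
  rw [hch, det_diag_add_rank_one _ _ _ (fun i => Polynomial.X_sub_C_ne_zero (p i))]

theorem stmt_1 (n k : ℕ) (hkn : k ≤ n) (p q : Fin n → ℝ) (β : ℝ)
    (M : Matrix (Fin n) (Fin n) ℝ)
    (hMdef : ∀ i j, M i j = p i * (if i = j then 1 else 0) - β * (q i * q j))
    (hM : M.IsHermitian) :
    esym Finset.univ k hM.eigenvalues
      = esym Finset.univ k p
        - β * ∑ i, q i ^ 2 *
            (if k = 0 then 0 else esym (Finset.univ.erase i) (k - 1) p) := by
  rcases Nat.eq_zero_or_pos k with hk0 | hkpos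
  · subst hk0
    simp [esym]
  -- k ≥ 1
  have hkne : k ≠ 0 := hkpos.ne'
  have hcard : (Finset.univ : Finset (Fin n)).card = n := by simp
  have hcarde : ∀ i : Fin n, (Finset.univ.erase i).card = n - 1 := by
    intro i
    rw [Finset.card_erase_of_mem (Finset.mem_univ i), hcard]
  have hco := congrArg (fun P => Polynomial.coeff P (n - k))
    ((charpoly_eq_prod_eigen M hM).symm.trans (charpoly_formula p q β M hMdef))
  simp only [Polynomial.coeff_add, Polynomial.finset_sum_coeff] at hco
  -- LHS coefficient
  have hL : (∏ i, (Polynomial.X - Polynomial.C (hM.eigenvalues i))).coeff (n - k)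
      = (-1 : ℝ) ^ k * esym Finset.univ k hM.eigenvalues := by
    have := coeff_prod_X_sub_C Finset.univ hM.eigenvalues (k := k) (by rw [hcard]; exact hkn)
    rwa [hcard] at this
  have hP : (∏ i, (Polynomial.X - Polynomial.C (p i))).coeff (n - k)
      = (-1 : ℝ) ^ k * esym Finset.univ k p := by
    have := coeff_prod_X_sub_C Finset.univ p (k := k) (by rw [hcard]; exact hkn)
    rwa [hcard] at this
  have hE : ∀ i : Fin n,
      ((Polynomial.C (β * q i) * Polynomial.C (q i)
        * ∏ j ∈ Finset.univ.erase i, (Polynomial.X - Polynomial.C (p j))).coeff (n - k))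
      = β * q i ^ 2 * ((-1 : ℝ) ^ (k - 1) * esym (Finset.univ.erase i) (k - 1) p) := by
    intro i
    have h1 : k - 1 ≤ (Finset.univ.erase i).card := by
      rw [hcarde i]; omega
    have h2 : (Finset.univ.erase i).card - (k - 1) = n - k := by
      rw [hcarde i]; omega
    have := coeff_prod_X_sub_C (Finset.univ.erase i) p h1
    rw [h2] at this
    rw [← Polynomial.C_mul, Polynomial.coeff_C_mul, this]
    ring
  rw [hL, hP] at hco
  rw [Finset.sum_congr rfl (fun i _ => hE i)] at hco
  -- final algebra
  have hne : ((-1 : ℝ) ^ k) ≠ 0 := by positivity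
  have hpow : (-1 : ℝ) ^ k = (-1 : ℝ) ^ (k - 1) * (-1) := by
    rw [← pow_succ]
    congr 1
    omega
  have hsum : ∑ i : Fin n, β * q i ^ 2 * ((-1 : ℝ) ^ (k - 1) * esym (Finset.univ.erase i) (k - 1) p)
      = (-1 : ℝ) ^ (k - 1) * (β * ∑ i : Fin n, q i ^ 2 * esym (Finset.univ.erase i) (k - 1) p) := by
    rw [Finset.mul_sum, Finset.mul_sum]
    exact Finset.sum_congr rfl fun i _ => by ring
  rw [hsum] at hco
  simp only [if_neg hkne]
  apply mul_left_cancel₀ hne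
  rw [hco, hpow]
  ring
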